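/- Let λ ≥ 0, r ≥ 1, and 1 ≤ A ≤ B be integers, and let M ⊆ ℕ. Then the number of integers n ∈ [A, B) such that s^M((n+r)³) - s^M(n³) ≠ s^{M ∩ [0,λ)}((n+r)³) - s^{M ∩ [0,λ)}(n³) is at most (10/3) · r · (B²/A²) · ((B-A)·B²·2^{-λ} + 1). -/

import Mathlib

/-- The binary sum of digits of `n` restricted to indices in the set `M`. -/
noncomputable def sdig (M : Set ℕ) (n : ℕ) : ℕ :=
  ∑ i ∈ Finset.range (n + 1), M.indicator (fun i => n / 2 ^ i % 2) i

lemma sdig_eq_sum (M : Set ℕ) (x N : ℕ) (h : x < N) :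
    sdig M x = ∑ i ∈ Finset.range N, M.indicator (fun i => x / 2 ^ i % 2) i := by
  classical
  unfold sdig
  apply Finset.sum_subset (Finset.range_subset_range.mpr h)
  intro i _ hi
  simp only [Finset.mem_range, not_lt] at hi
  have hx : x / 2 ^ i = 0 := by
    apply Nat.div_eq_of_lt
    calc x < 2 ^ x := Nat.lt_two_pow_self (n := x)
    _ ≤ 2 ^ i := Nat.pow_le_pow_right (by norm_num) (by omega)
  rw [Set.indicator_apply]
  split <;> simp [hx]

lemma sdig_split (M : Set ℕ) (lam x : ℕ) :
    sdig M x = sdig (M ∩ Set.Ico 0 lam) x + sdig (M ∩ Set.Ici lam) x := by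
  classical
  unfold sdig
  rw [← Finset.sum_add_distrib]
  apply Finset.sum_congr rfl
  intro i _
  by_cases h1 : i ∈ M
  · by_cases h2 : i < lam <;>
      simp [Set.indicator_apply, Set.mem_Ico, Set.mem_Ici, h1, h2, Nat.not_lt.mp]
  · simp [Set.indicator_apply, h1]

lemma sdig_hi_eq (M : Set ℕ) (lam x y : ℕ) (h : x / 2 ^ lam = y / 2 ^ lam) :
    sdig (M ∩ Set.Ici lam) x = sdig (M ∩ Set.Ici lam) y := by
  classical
  rw [sdig_eq_sum _ x (max x y + 1) (by omega), sdig_eq_sum _ y (max x y + 1) (by omega)]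
  apply Finset.sum_congr rfl
  intro i _
  rw [Set.indicator_apply, Set.indicator_apply]
  split
  · next hi =>
    have hlam : lam ≤ i := hi.2
    have hp : 2 ^ lam * 2 ^ (i - lam) = 2 ^ i := by
      rw [← pow_add]; congr 1; omega
    have e1 : x / 2 ^ i = x / 2 ^ lam / 2 ^ (i - lam) := by
      rw [Nat.div_div_eq_div_mul, hp]
    have e2 : y / 2 ^ i = y / 2 ^ lam / 2 ^ (i - lam) := by
      rw [Nat.div_div_eq_div_mul, hp]
    simp only [e1, e2, h]
  · rfl

lemma sdig_diff_eq (M : Set ℕ) (lam x y : ℕ) (h : x / 2 ^ lam = y / 2 ^ lam) :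
    (sdig M x : ℤ) - sdig M y = (sdig (M ∩ Set.Ico 0 lam) x : ℤ) - sdig (M ∩ Set.Ico 0 lam) y := by
  rw [sdig_split M lam x, sdig_split M lam y, sdig_hi_eq M lam x y h]
  push_cast; ring

lemma telescope_sum (r : ℕ) : ∀ (F : ℕ → ℝ) (A B : ℕ), A ≤ B →
    ∑ n ∈ Finset.Ico A B, (F (n + r) - F n)
      = ∑ j ∈ Finset.range r, (F (B + j) - F (A + j)) := by
  induction r with
  | zero => simp
  | succ r ih =>
    intro F A B hAB
    have h1 : ∑ n ∈ Finset.Ico A B, (F (n + (r + 1)) - F n)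
        = ∑ n ∈ Finset.Ico A B, ((F (n + r + 1) - F (n + 1)) + (F (n + 1) - F n)) := by
      apply Finset.sum_congr rfl
      intro n _
      have e : n + (r + 1) = n + r + 1 := by omega
      rw [e]; ring
    have h2 : ∑ n ∈ Finset.Ico A B, (F (n + 1) - F n) = F B - F A := by
      rw [Finset.sum_Ico_eq_sum_range]
      have h3 := Finset.sum_range_sub (fun i => F (A + i)) (B - A)
      have e : A + (B - A) = B := by omega
      rw [e] at h3
      exact h3
    have h4 := ih (fun n => F (n + 1)) A B hAB
    rw [h1, Finset.sum_add_distrib, h2, h4, Finset.sum_range_succ']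
    rfl

set_option maxHeartbeats 1000000 in
open Classical in
/-- Carry lemma, second part. -/
theorem thm12 (lam r A B : ℕ) (hr : 1 ≤ r) (hA : 1 ≤ A) (hAB : A ≤ B) (M : Set ℕ) :
    (((Finset.Ico A B).filter fun n =>
        (sdig M ((n + r) ^ 3) : ℤ) - (sdig M (n ^ 3) : ℤ) ≠
          (sdig (M ∩ Set.Ico 0 lam) ((n + r) ^ 3) : ℤ) -
            (sdig (M ∩ Set.Ico 0 lam) (n ^ 3) : ℤ)).card : ℝ) ≤
      (10 / 3) * (r : ℝ) * ((B : ℝ) ^ 2 / (A : ℝ) ^ 2) *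
        (((B : ℝ) - A) * (B : ℝ) ^ 2 / 2 ^ lam + 1) := by
  have ha1 : (1 : ℝ) ≤ (A : ℝ) := by exact_mod_cast hA
  have hab : (A : ℝ) ≤ (B : ℝ) := by exact_mod_cast hAB
  have hr1 : (1 : ℝ) ≤ (r : ℝ) := by exact_mod_cast hr
  set a : ℝ := (A : ℝ) with ha
  set b : ℝ := (B : ℝ) with hb
  set rr : ℝ := (r : ℝ) with hrr
  have hdpos : (0 : ℝ) < 2 ^ lam := by positivity
  have hX : (0 : ℝ) ≤ (b - a) * b ^ 2 / 2 ^ lam := by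
    apply div_nonneg _ (le_of_lt hdpos)
    nlinarith
  have hBA : (1 : ℝ) ≤ b ^ 2 / a ^ 2 := by
    rw [le_div_iff₀ (by positivity)]
    nlinarith
  by_cases hcase : b - a ≤ 10 / 3 * rr
  · -- trivial case
    have hc1 : (((Finset.Ico A B).filter fun n =>
        (sdig M ((n + r) ^ 3) : ℤ) - (sdig M (n ^ 3) : ℤ) ≠
          (sdig (M ∩ Set.Ico 0 lam) ((n + r) ^ 3) : ℤ) -
            (sdig (M ∩ Set.Ico 0 lam) (n ^ 3) : ℤ)).card : ℝ) ≤ b - a := by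
      have h1 := Finset.card_filter_le (Finset.Ico A B) (fun n =>
        (sdig M ((n + r) ^ 3) : ℤ) - (sdig M (n ^ 3) : ℤ) ≠
          (sdig (M ∩ Set.Ico 0 lam) ((n + r) ^ 3) : ℤ) -
            (sdig (M ∩ Set.Ico 0 lam) (n ^ 3) : ℤ))
      rw [Nat.card_Ico] at h1
      have h2 : ((B - A : ℕ) : ℝ) = b - a := by
        rw [hb, ha]; push_cast [hAB]; ring
      calc _ ≤ ((B - A : ℕ) : ℝ) := by exact_mod_cast h1
      _ = b - a := h2
    have h3 : 10 / 3 * rr ≤ 10 / 3 * rr * (b ^ 2 / a ^ 2) * ((b - a) * b ^ 2 / 2 ^ lam + 1) := by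
      nlinarith [mul_nonneg (mul_nonneg (by linarith : (0:ℝ) ≤ 10 / 3 * rr)
        (by linarith : (0:ℝ) ≤ b ^ 2 / a ^ 2)) hX,
        mul_nonneg (by linarith : (0:ℝ) ≤ 10 / 3 * rr) (by linarith : (0:ℝ) ≤ b ^ 2 / a ^ 2 - 1)]
    linarith
  · -- main case : 10/3 * r < b - a
    push_neg at hcase
    set G : ℕ → ℝ := fun n => ((n ^ 3 / 2 ^ lam : ℕ) : ℝ) with hG
    have hGmono : ∀ m n : ℕ, m ≤ n → m ^ 3 / 2 ^ lam ≤ n ^ 3 / 2 ^ lam := by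
      intro m n hmn
      exact Nat.div_le_div_right (Nat.pow_le_pow_left hmn 3)
    have step1 : (((Finset.Ico A B).filter fun n =>
        (sdig M ((n + r) ^ 3) : ℤ) - (sdig M (n ^ 3) : ℤ) ≠
          (sdig (M ∩ Set.Ico 0 lam) ((n + r) ^ 3) : ℤ) -
            (sdig (M ∩ Set.Ico 0 lam) (n ^ 3) : ℤ)).card : ℝ)
        ≤ ∑ n ∈ Finset.Ico A B, (G (n + r) - G n) := by
      rw [Finset.card_eq_sum_ones]
      push_cast
      calc (∑ _n ∈ (Finset.Ico A B).filter _, (1:ℝ))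
          ≤ ∑ n ∈ (Finset.Ico A B).filter _, (G (n + r) - G n) := by
            apply Finset.sum_le_sum
            intro n hn
            have hp := (Finset.mem_filter.mp hn).2
            have hne : n ^ 3 / 2 ^ lam ≠ (n + r) ^ 3 / 2 ^ lam := by
              intro heq
              exact hp (sdig_diff_eq M lam _ _ heq.symm)
            have hle : n ^ 3 / 2 ^ lam ≤ (n + r) ^ 3 / 2 ^ lam :=
              hGmono n (n + r) (by omega)
            have h5 : n ^ 3 / 2 ^ lam + 1 ≤ (n + r) ^ 3 / 2 ^ lam := by omega
            have h6 : ((n ^ 3 / 2 ^ lam : ℕ) : ℝ) + 1 ≤ (((n + r) ^ 3 / 2 ^ lam : ℕ) : ℝ) := by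
              exact_mod_cast h5
            simp only [hG]
            linarith
      _ ≤ ∑ n ∈ Finset.Ico A B, (G (n + r) - G n) := by
            apply Finset.sum_le_sum_of_subset_of_nonneg (Finset.filter_subset _ _)
            intro n _ _
            have h5 := hGmono n (n + r) (by omega)
            have h6 : ((n ^ 3 / 2 ^ lam : ℕ) : ℝ) ≤ (((n + r) ^ 3 / 2 ^ lam : ℕ) : ℝ) := by
              exact_mod_cast h5
            simp only [hG]
            linarith
    rw [telescope_sum r G A B hAB] at step1
    have step2 : ∀ j ∈ Finset.range r, G (B + j) - G (A + j)
        ≤ 10 / 3 * (b ^ 2 / a ^ 2) * ((b - a) * b ^ 2 / 2 ^ lam + 1) := by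
      intro j hj
      have hjr : (j : ℝ) ≤ rr - 1 := by
        have h1 : (j : ℕ) + 1 ≤ r := Finset.mem_range.mp hj
        have h2 : ((j : ℕ) : ℝ) + 1 ≤ (r : ℝ) := by exact_mod_cast h1
        rw [hrr]; linarith
      set x : ℝ := (j : ℝ) with hx
      have hx0 : (0 : ℝ) ≤ x := Nat.cast_nonneg j
      have hG1 : G (B + j) ≤ (b + x) ^ 3 / 2 ^ lam := by
        have h1 : (((B + j) ^ 3 / 2 ^ lam : ℕ) : ℝ)
            ≤ (((B + j) ^ 3 : ℕ) : ℝ) / ((2 ^ lam : ℕ) : ℝ) := Nat.cast_div_le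
        have h2 : (((B + j) ^ 3 : ℕ) : ℝ) = (b + x) ^ 3 := by rw [hb, hx]; push_cast; ring
        have h3 : ((2 ^ lam : ℕ) : ℝ) = (2 : ℝ) ^ lam := by push_cast; ring
        rw [h2, h3] at h1
        exact h1
      have hG2 : (a + x) ^ 3 / 2 ^ lam - 1 ≤ G (A + j) := by
        have h1 : (A + j) ^ 3 < ((A + j) ^ 3 / 2 ^ lam + 1) * 2 ^ lam :=
          (Nat.div_lt_iff_lt_mul (by positivity)).1 (Nat.lt_succ_self _)
        have h2 : (((A + j) ^ 3 : ℕ) : ℝ) < ((((A + j) ^ 3 / 2 ^ lam : ℕ) : ℝ) + 1) * 2 ^ lam := by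
          exact_mod_cast h1
        have h3 : (((A + j) ^ 3 : ℕ) : ℝ) = (a + x) ^ 3 := by rw [ha, hx]; push_cast; ring
        rw [h3] at h2
        rw [sub_le_iff_le_add, div_le_iff₀ hdpos]
        nlinarith
      have hkey : a * (b + x) ≤ b ^ 2 := by
        nlinarith [mul_nonneg (by linarith : (0:ℝ) ≤ b - a) (by linarith : (0:ℝ) ≤ b - 3/10 * a),
          mul_le_mul_of_nonneg_left (by linarith : x ≤ 3/10 * (b - a)) (by linarith : (0:ℝ) ≤ a)]
      have hS : (b + x) ^ 2 + (b + x) * (a + x) + (a + x) ^ 2 ≤ 3 * (b + x) ^ 2 := by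
        nlinarith [mul_le_mul_of_nonneg_left (by linarith : a + x ≤ b + x) (by linarith : (0:ℝ) ≤ b + x),
          mul_le_mul_of_nonneg_left (by linarith : a + x ≤ b + x) (by linarith : (0:ℝ) ≤ a + x),
          mul_le_mul_of_nonneg_right (by linarith : a + x ≤ b + x) (by linarith : (0:ℝ) ≤ b + x)]
      have h9 : (b + x) ^ 3 - (a + x) ^ 3 ≤ (b - a) * (3 * (b + x) ^ 2) := by
        have hfact : (b + x) ^ 3 - (a + x) ^ 3
            = (b - a) * ((b + x) ^ 2 + (b + x) * (a + x) + (a + x) ^ 2) := by ring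
        rw [hfact]
        exact mul_le_mul_of_nonneg_left hS (by linarith)
      have e3 : (a * (b + x)) ^ 2 ≤ (b ^ 2) ^ 2 :=
        pow_le_pow_left₀ (by positivity) hkey 2
      have h10 : a ^ 2 * ((b + x) ^ 3 - (a + x) ^ 3) ≤ 10 / 3 * (b - a) * b ^ 4 := by
        have e1 : a ^ 2 * ((b + x) ^ 3 - (a + x) ^ 3)
            ≤ a ^ 2 * ((b - a) * (3 * (b + x) ^ 2)) :=
          mul_le_mul_of_nonneg_left h9 (sq_nonneg a)
        have e2 : a ^ 2 * ((b - a) * (3 * (b + x) ^ 2)) = 3 * (b - a) * (a * (b + x)) ^ 2 := by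
          ring
        have e4 : 3 * (b - a) * (a * (b + x)) ^ 2 ≤ 3 * (b - a) * (b ^ 2) ^ 2 :=
          mul_le_mul_of_nonneg_left e3 (by linarith)
        nlinarith [mul_nonneg (by linarith : (0:ℝ) ≤ b - a) (by positivity : (0:ℝ) ≤ b ^ 4)]
      have hcube : (b + x) ^ 3 - (a + x) ^ 3 ≤ 10 / 3 * (b - a) * b ^ 4 / a ^ 2 := by
        rw [le_div_iff₀ (by positivity : (0:ℝ) < a ^ 2)]
        nlinarith [h10]
      have hdiv : ((b + x) ^ 3 - (a + x) ^ 3) / 2 ^ lam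
          ≤ 10 / 3 * (b ^ 2 / a ^ 2) * ((b - a) * b ^ 2 / 2 ^ lam) := by
        have h11 : ((b + x) ^ 3 - (a + x) ^ 3) / 2 ^ lam
            ≤ (10 / 3 * (b - a) * b ^ 4 / a ^ 2) / 2 ^ lam := by gcongr
        have h12 : (10 / 3 * (b - a) * b ^ 4 / a ^ 2) / 2 ^ lam
            = 10 / 3 * (b ^ 2 / a ^ 2) * ((b - a) * b ^ 2 / 2 ^ lam) := by
          field_simp
        linarith
      have hsub : ((b + x) ^ 3 - (a + x) ^ 3) / 2 ^ lam
          = (b + x) ^ 3 / 2 ^ lam - (a + x) ^ 3 / 2 ^ lam := sub_div _ _ _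
      have hfin : 10 / 3 * (b ^ 2 / a ^ 2) * ((b - a) * b ^ 2 / 2 ^ lam + 1)
          = 10 / 3 * (b ^ 2 / a ^ 2) * ((b - a) * b ^ 2 / 2 ^ lam)
            + 10 / 3 * (b ^ 2 / a ^ 2) := by ring
      linarith
    have step3 : ∑ j ∈ Finset.range r, (G (B + j) - G (A + j))
        ≤ rr * (10 / 3 * (b ^ 2 / a ^ 2) * ((b - a) * b ^ 2 / 2 ^ lam + 1)) := by
      calc ∑ j ∈ Finset.range r, (G (B + j) - G (A + j))
          ≤ ∑ _j ∈ Finset.range r,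
            (10 / 3 * (b ^ 2 / a ^ 2) * ((b - a) * b ^ 2 / 2 ^ lam + 1)) :=
            Finset.sum_le_sum step2
      _ = rr * (10 / 3 * (b ^ 2 / a ^ 2) * ((b - a) * b ^ 2 / 2 ^ lam + 1)) := by
            rw [Finset.sum_const, Finset.card_range, nsmul_eq_mul, hrr]
    calc _ ≤ ∑ j ∈ Finset.range r, (G (B + j) - G (A + j)) := step1
    _ ≤ rr * (10 / 3 * (b ^ 2 / a ^ 2) * ((b - a) * b ^ 2 / 2 ^ lam + 1)) := step3
    _ = 10 / 3 * rr * (b ^ 2 / a ^ 2) * ((b - a) * b ^ 2 / 2 ^ lam + 1) := by ring
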